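/- Let x, y ∈ EuclideanSpace ℝ (Fin (n+1)) be points whose last coordinate is positive. Then the image under P of the segment joining x and y equals the segment joining P(x) and P(y); that is, P '' (segment ℝ x y) = segment ℝ (P x) (P y). -/

import Mathlib

/-- The projective transformation `P(x₁, …, xₙ, x_{n+1}) = (x₁/x_{n+1}, …, xₙ/x_{n+1}, 1/x_{n+1})`
on the open half-space where the last coordinate is positive. -/
noncomputable def projTrans (n : ℕ) (x : EuclideanSpace ℝ (Fin (n + 1))) :
    EuclideanSpace ℝ (Fin (n + 1)) :=
  WithLp.toLp 2 (fun i => if i = Fin.last n then (x (Fin.last n))⁻¹ else x i / x (Fin.last n))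

lemma projTrans_last (n : ℕ) (x : EuclideanSpace ℝ (Fin (n + 1))) :
    projTrans n x (Fin.last n) = (x (Fin.last n))⁻¹ := by
  simp [projTrans]

lemma projTrans_invol (n : ℕ) (x : EuclideanSpace ℝ (Fin (n + 1)))
    (hx : x (Fin.last n) ≠ 0) : projTrans n (projTrans n x) = x := by
  ext i
  by_cases h : i = Fin.last n
  · subst h; simp [projTrans, hx]
  · simp only [projTrans, if_neg h, if_pos rfl]
    field_simp
    rw [if_pos trivial, mul_assoc, mul_one_div_cancel hx, mul_one]

lemma projTrans_subset (n : ℕ) (x y : EuclideanSpace ℝ (Fin (n + 1)))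
    (hx : 0 < x (Fin.last n)) (hy : 0 < y (Fin.last n)) :
    projTrans n '' (segment ℝ x y) ⊆ segment ℝ (projTrans n x) (projTrans n y) := by
  rintro _ ⟨z, ⟨ta, tb, hta, htb, hab, rfl⟩, rfl⟩
  set a := x (Fin.last n) with ha
  set b := y (Fin.last n) with hb
  have hcoord : ∀ i, (ta • x + tb • y : EuclideanSpace ℝ (Fin (n+1))) i
      = ta * x i + tb * y i := by
    intro i
    simp [PiLp.add_apply, PiLp.smul_apply, smul_eq_mul]
  have hc : 0 < ta * a + tb * b := by
    rcases lt_or_eq_of_le hta with h | h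
    · positivity
    · have : tb = 1 := by linarith
      simp [← h, this]; positivity
  set c := ta * a + tb * b with hcdef
  refine ⟨ta * a / c, tb * b / c, by positivity, by positivity, ?_, ?_⟩
  · field_simp; exact hcdef.symm
  · ext i
    have hcz : (ta • x + tb • y : EuclideanSpace ℝ (Fin (n+1))) (Fin.last n) = c := by
      rw [hcoord]
    by_cases h : i = Fin.last n
    · subst h
      simp only [PiLp.add_apply, PiLp.smul_apply, smul_eq_mul, projTrans, if_pos rfl, if_true, eq_self_iff_true, ← ha, ← hb]
      rw [div_mul_eq_mul_div, div_mul_eq_mul_div, mul_inv_cancel_right₀ hx.ne',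
        mul_inv_cancel_right₀ hy.ne', ← add_div, hab, one_div, hcdef]
    · simp only [PiLp.add_apply, PiLp.smul_apply, smul_eq_mul, projTrans, if_neg h, ← ha, ← hb]
      field_simp
      rw [← hcdef, mul_div_cancel_left₀ _ hc.ne']

/-- `P` maps the segment joining `x` and `y` onto the segment joining `P x` and `P y`. -/
theorem projTrans_image_segment (n : ℕ) (hn : 1 ≤ n)
    (x y : EuclideanSpace ℝ (Fin (n + 1)))
    (hx : 0 < x (Fin.last n)) (hy : 0 < y (Fin.last n)) :
    projTrans n '' (segment ℝ x y) = segment ℝ (projTrans n x) (projTrans n y) := by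
  have hx' : 0 < projTrans n x (Fin.last n) := by rw [projTrans_last]; positivity
  have hy' : 0 < projTrans n y (Fin.last n) := by rw [projTrans_last]; positivity
  apply Set.Subset.antisymm (projTrans_subset n x y hx hy)
  intro z hz
  have hsub := projTrans_subset n _ _ hx' hy'
  rw [projTrans_invol n x hx.ne', projTrans_invol n y hy.ne'] at hsub
  have hPz : projTrans n z ∈ segment ℝ x y := hsub ⟨z, hz, rfl⟩
  have hzlast : 0 < z (Fin.last n) := by
    obtain ⟨ta, tb, hta, htb, hab, rfl⟩ := hz
    have : (ta • projTrans n x + tb • projTrans n y : EuclideanSpace ℝ (Fin (n+1)))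
        (Fin.last n) = ta * projTrans n x (Fin.last n) + tb * projTrans n y (Fin.last n) := by
      simp [PiLp.add_apply, PiLp.smul_apply, smul_eq_mul]
    rw [this]
    rcases lt_or_eq_of_le hta with h | h
    · positivity
    · have : tb = 1 := by linarith
      simp [← h, this]; positivity
  exact ⟨projTrans n z, hPz, projTrans_invol n z hzlast.ne'⟩
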